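/- If w : ℝ^p → ℝ is a probability density such that ∫_{ℝ^p} cos(t·z) w(t) dt = Ψ(‖z‖²) for all z ∈ ℝ^p for some kernel function Ψ, then the weighted L²-distance T = ∫_{ℝ^p} |φ_n(t) − φ_{0,m}(t)|² w(t) dt equals (1/n²)∑_{j,k=1}^n Ψ(‖X_j−X_k‖²) + (1/m²)∑_{j,k=1}^m Ψ(‖X_{0,j}−X_{0,k}‖²) − (2/(nm))∑_{j=1}^n∑_{k=1}^m Ψ(‖X_j−X_{0,k}‖²). -/

import Mathlib

open scoped BigOperators
open MeasureTheory

lemma exp_mul_conj_re' (c d : ℝ) : (Complex.exp (Complex.I * c) * (starRingEnd ℂ) (Complex.exp (Complex.I * d))).re = Real.cos (c - d) := by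
  rw [← Complex.exp_conj, ← Complex.exp_add]
  have : Complex.I * ↑c + (starRingEnd ℂ) (Complex.I * ↑d) = ((c - d : ℝ) : ℂ) * Complex.I := by
    simp [Complex.conj_I]; ring
  rw [this, Complex.exp_ofReal_mul_I_re]

lemma sum_mul_conj_re' {n m : ℕ} (c : Fin n → ℝ) (d : Fin m → ℝ) :
    ((∑ j, Complex.exp (Complex.I * c j)) * (starRingEnd ℂ) (∑ k, Complex.exp (Complex.I * d k))).re
    = ∑ j, ∑ k, Real.cos (c j - d k) := by
  rw [map_sum, Finset.sum_mul]
  simp only [Finset.mul_sum]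
  rw [Complex.re_sum]
  refine Finset.sum_congr rfl fun j _ => ?_
  rw [Complex.re_sum]
  exact Finset.sum_congr rfl fun k _ => exp_mul_conj_re' (c j) (d k)

lemma pointwise_abs' {n m : ℕ} (c : Fin n → ℝ) (d : Fin m → ℝ) :
    (‖(1 / (n : ℂ)) * ∑ j, Complex.exp (Complex.I * c j)
        - (1 / (m : ℂ)) * ∑ k, Complex.exp (Complex.I * d k)‖) ^ 2
    = (1 / (n : ℝ) ^ 2) * ∑ j, ∑ k, Real.cos (c j - c k)
      + (1 / (m : ℝ) ^ 2) * ∑ j, ∑ k, Real.cos (d j - d k)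
      - (2 / ((n : ℝ) * (m : ℝ))) * ∑ j, ∑ k, Real.cos (c j - d k) := by
  set A := ∑ j, Complex.exp (Complex.I * c j) with hA
  set B := ∑ k, Complex.exp (Complex.I * d k) with hB
  have key : ∀ z : ℂ, ‖z‖ ^ 2 = (z * (starRingEnd ℂ) z).re := by
    intro z; rw [Complex.mul_conj]; simp [Complex.sq_norm]
  rw [key]
  have expand : ((1 / (n : ℂ)) * A - (1 / (m : ℂ)) * B) *
      (starRingEnd ℂ) ((1 / (n : ℂ)) * A - (1 / (m : ℂ)) * B)
      = ((1 / (n:ℝ)^2 : ℝ) : ℂ) * (A * (starRingEnd ℂ) A)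
        + ((1 / (m:ℝ)^2 : ℝ) : ℂ) * (B * (starRingEnd ℂ) B)
        - ((1 / ((n:ℝ)*(m:ℝ)) : ℝ) : ℂ) * (A * (starRingEnd ℂ) B)
        - ((1 / ((n:ℝ)*(m:ℝ)) : ℝ) : ℂ) * (B * (starRingEnd ℂ) A) := by
    have h1 : (starRingEnd ℂ) ((1 : ℂ) / (n : ℂ)) = 1 / (n : ℂ) := by simp
    push_cast
    rw [map_sub, map_mul, map_mul, h1]
    simp only [map_div₀, map_one, Complex.conj_natCast]
    ring
  rw [expand]
  have hBA : (B * (starRingEnd ℂ) A).re = (A * (starRingEnd ℂ) B).re := by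
    rw [← Complex.conj_re (B * (starRingEnd ℂ) A), map_mul, Complex.conj_conj, mul_comm]
  simp only [Complex.sub_re, Complex.add_re, Complex.re_ofReal_mul, hBA]
  simp only [hA, hB, sum_mul_conj_re']
  ring

theorem weighted_L2_distance_kernel_form
    {p n m : ℕ} (hn : 1 ≤ n) (hm : 1 ≤ m)
    (X : Fin n → EuclideanSpace ℝ (Fin p))
    (X0 : Fin m → EuclideanSpace ℝ (Fin p))
    (w : EuclideanSpace ℝ (Fin p) → ℝ) (Ψ : ℝ → ℝ)
    (hw_nonneg : ∀ t, 0 ≤ w t)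
    (hw_int : Integrable w)
    (hw_prob : ∫ t, w t = 1)
    (hΨ : ∀ z : EuclideanSpace ℝ (Fin p),
        ∫ t, Real.cos (inner ℝ t z) * w t = Ψ (‖z‖ ^ 2)) :
    ∫ t, (‖
        ((1 / (n : ℂ)) * ∑ j, Complex.exp (Complex.I * ((inner ℝ t (X j) : ℝ) : ℂ))
          - (1 / (m : ℂ)) * ∑ j, Complex.exp (Complex.I * ((inner ℝ t (X0 j) : ℝ) : ℂ)))‖) ^ 2
        * w t
    = (1 / (n : ℝ) ^ 2) * ∑ j, ∑ k, Ψ (‖X j - X k‖ ^ 2)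
      + (1 / (m : ℝ) ^ 2) * ∑ j, ∑ k, Ψ (‖X0 j - X0 k‖ ^ 2)
      - (2 / ((n : ℝ) * (m : ℝ))) * ∑ j, ∑ k, Ψ (‖X j - X0 k‖ ^ 2) := by
  have hInt : ∀ z : EuclideanSpace ℝ (Fin p),
      Integrable (fun t => Real.cos (inner ℝ t z) * w t) := by
    intro z
    refine hw_int.bdd_mul (c := 1) ?_ (Filter.Eventually.of_forall fun t => by
      rw [Real.norm_eq_abs]; exact Real.abs_cos_le_one _)
    exact (Real.continuous_cos.comp (continuous_id.inner continuous_const)).aestronglyMeasurable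
  have hstep : (∫ t, (‖
        ((1 / (n : ℂ)) * ∑ j, Complex.exp (Complex.I * ((inner ℝ t (X j) : ℝ) : ℂ))
          - (1 / (m : ℂ)) * ∑ j, Complex.exp (Complex.I * ((inner ℝ t (X0 j) : ℝ) : ℂ)))‖) ^ 2
        * w t)
      = ∫ t, ((1 / (n : ℝ) ^ 2) * ∑ j, ∑ k, (Real.cos (inner ℝ t (X j - X k)) * w t)
        + (1 / (m : ℝ) ^ 2) * ∑ j, ∑ k, (Real.cos (inner ℝ t (X0 j - X0 k)) * w t)
        - (2 / ((n : ℝ) * (m : ℝ))) * ∑ j, ∑ k, (Real.cos (inner ℝ t (X j - X0 k)) * w t)) := by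
    refine integral_congr_ae (Filter.Eventually.of_forall fun t => ?_)
    dsimp only
    rw [pointwise_abs' (fun j => (inner ℝ t (X j) : ℝ)) (fun k => (inner ℝ t (X0 k) : ℝ))]
    simp only [inner_sub_right, ← Finset.sum_mul]
    ring
  rw [hstep]
  have I1 : Integrable (fun t => (1 / (n : ℝ) ^ 2) * ∑ j, ∑ k, (Real.cos (inner ℝ t (X j - X k)) * w t)) :=
    (integrable_finset_sum _ fun j _ => integrable_finset_sum _ fun k _ => hInt _).const_mul _
  have I2 : Integrable (fun t => (1 / (m : ℝ) ^ 2) * ∑ j, ∑ k, (Real.cos (inner ℝ t (X0 j - X0 k)) * w t)) :=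
    (integrable_finset_sum _ fun j _ => integrable_finset_sum _ fun k _ => hInt _).const_mul _
  have I3 : Integrable (fun t => (2 / ((n : ℝ) * (m : ℝ))) * ∑ j, ∑ k, (Real.cos (inner ℝ t (X j - X0 k)) * w t)) :=
    (integrable_finset_sum _ fun j _ => integrable_finset_sum _ fun k _ => hInt _).const_mul _
  have I12 : Integrable (fun t => (1 / (n : ℝ) ^ 2) * ∑ j, ∑ k, (Real.cos (inner ℝ t (X j - X k)) * w t)
      + (1 / (m : ℝ) ^ 2) * ∑ j, ∑ k, (Real.cos (inner ℝ t (X0 j - X0 k)) * w t)) := I1.add I2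
  rw [integral_sub I12 I3, integral_add I1 I2, integral_const_mul, integral_const_mul,
    integral_const_mul]
  have key : ∀ {q r : ℕ} (Y : Fin q → EuclideanSpace ℝ (Fin p)) (Z : Fin r → EuclideanSpace ℝ (Fin p)),
      (∫ t, ∑ j, ∑ k, (Real.cos (inner ℝ t (Y j - Z k)) * w t)) = ∑ j, ∑ k, Ψ (‖Y j - Z k‖ ^ 2) := by
    intro q r Y Z
    rw [integral_finset_sum _ (fun j _ => integrable_finset_sum _ fun k _ => hInt _)]
    refine Finset.sum_congr rfl fun j _ => ?_
    rw [integral_finset_sum _ (fun k _ => hInt _)]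
    exact Finset.sum_congr rfl fun k _ => hΨ _
  rw [key, key, key]
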